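/- arXiv:0806.3380 — 2 statements merged into one kernel-verified Lean document; each statement's English description precedes it below -/
import Mathlib

section
/- Let H be a full additive subcategory of a triangulated category C which generates C, and let w be a weight structure on C whose heart contains H. Then the heart C_{w=0} equals the Karoubi envelope of H in C, i.e., an object of C belongs to C_{w=0} if and only if it is a retract (direct summand in C) of an object of H. -/
open CategoryTheory CategoryTheory.Limits CategoryTheory.Pretriangulated

universe v u

/-- The shift `S[n]` of a class of objects `S`: the objects isomorphic to `A⟦n⟧`
for some `A ∈ S`. -/
def shiftedSet {C : Type u} [Category.{v} C] [HasShift C ℤ] (S : Set C) (n : ℤ) : Set C :=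
  {X | ∃ A ∈ S, Nonempty (X ≅ A⟦n⟧)}

/-- A weight structure on a pretriangulated category `C`, following Bondarko. -/
structure WeightStructure (C : Type u) [Category.{v} C] [Preadditive C] [HasZeroObject C]
    [HasShift C ℤ] [∀ n : ℤ, (shiftFunctor C n).Additive] [Pretriangulated C] where
  /-- the objects of weights `≤ 0` -/
  le : Set C
  /-- the objects of weights `≥ 0` -/
  ge : Set C
  /-- `C_{w ≤ 0}` is closed under retracts -/
  retract_le : ∀ (X M : C) (i : X ⟶ M) (r : M ⟶ X), i ≫ r = 𝟙 X → M ∈ le → X ∈ le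
  /-- `C_{w ≥ 0}` is closed under retracts -/
  retract_ge : ∀ (X M : C) (i : X ⟶ M) (r : M ⟶ X), i ≫ r = 𝟙 X → M ∈ ge → X ∈ ge
  /-- `C_{w ≤ 0} ⊆ C_{w ≤ 1}` -/
  le_shift : le ⊆ shiftedSet le 1
  /-- `C_{w ≥ 1} ⊆ C_{w ≥ 0}` -/
  ge_shift : shiftedSet ge 1 ⊆ ge
  /-- orthogonality -/
  orth : ∀ (M N : C), M ∈ le → N ∈ shiftedSet ge 1 → ∀ f : M ⟶ N, f = 0
  /-- existence of weight filtrations -/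
  exists_wf : ∀ M : C, ∃ (A B : C) (a : A ⟶ M) (b : M ⟶ B) (δ : B ⟶ A⟦(1:ℤ)⟧),
    Triangle.mk a b δ ∈ (distTriang C) ∧ A ∈ le ∧ B ∈ shiftedSet ge 1

namespace WeightStructure

variable {C : Type u} [Category.{v} C] [Preadditive C] [HasZeroObject C]
  [HasShift C ℤ] [∀ n : ℤ, (shiftFunctor C n).Additive] [Pretriangulated C]

/-- `C_{w ≤ n} := C_{w ≤ 0}[n]`. -/
def wLE (w : WeightStructure C) (n : ℤ) : Set C := shiftedSet w.le n

/-- `C_{w ≥ n} := C_{w ≥ 0}[n]`. -/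
def wGE (w : WeightStructure C) (n : ℤ) : Set C := shiftedSet w.ge n

/-- The heart `C_{w = 0} := C_{w ≤ 0} ∩ C_{w ≥ 0}`. -/
def heart (w : WeightStructure C) : Set C := w.le ∩ w.ge

/-- An object `M` is without weights `m, …, n` if it admits a weight filtration
avoiding these weights. -/
def WithoutWeights (w : WeightStructure C) (m n : ℤ) (M : C) : Prop :=
  ∃ (A B : C) (a : A ⟶ M) (b : M ⟶ B) (δ : B ⟶ A⟦(1:ℤ)⟧),
    Triangle.mk a b δ ∈ (distTriang C) ∧ A ∈ w.wLE (m - 1) ∧ B ∈ w.wGE (n + 1)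

end WeightStructure

/-- `H` is a (full) additive subcategory of `C` : it contains the zero objects and is
closed under biproducts (direct sums) taken in `C`. -/
def IsAdditiveSubcategory {C : Type u} [Category.{v} C] [Preadditive C] (H : Set C) : Prop :=
  (∀ X : C, Limits.IsZero X → X ∈ H) ∧
  (∀ (X Y Z : C), X ∈ H → Y ∈ H →
    ∀ (iX : X ⟶ Z) (iY : Y ⟶ Z) (pX : Z ⟶ X) (pY : Z ⟶ Y),
      iX ≫ pX = 𝟙 X → iY ≫ pY = 𝟙 Y → iX ≫ pY = 0 → iY ≫ pX = 0 →
      pX ≫ iX + pY ≫ iY = 𝟙 Z → Z ∈ H)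

/-- The smallest class of objects of `C` containing `H` and closed under isomorphisms,
shifts, and cones of morphisms. -/
inductive IsGenerated {C : Type u} [Category.{v} C] [Preadditive C] [HasZeroObject C]
    [HasShift C ℤ] [∀ n : ℤ, (shiftFunctor C n).Additive] [Pretriangulated C]
    (H : Set C) : C → Prop
  | of {X : C} (hX : X ∈ H) : IsGenerated H X
  | iso {X Y : C} (e : X ≅ Y) (hX : IsGenerated H X) : IsGenerated H Y
  | shift {X : C} (n : ℤ) (hX : IsGenerated H X) : IsGenerated H (X⟦n⟧)
  | cone {X Y Z : C} (f : X ⟶ Y) (g : Y ⟶ Z) (h : Z ⟶ X⟦(1:ℤ)⟧)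
      (hT : Triangle.mk f g h ∈ distTriang C)
      (hX : IsGenerated H X) (hY : IsGenerated H Y) : IsGenerated H Z

/-- `H` generates `C` as a triangulated category. -/
def Generates {C : Type u} [Category.{v} C] [Preadditive C] [HasZeroObject C]
    [HasShift C ℤ] [∀ n : ℤ, (shiftFunctor C n).Additive] [Pretriangulated C]
    (H : Set C) : Prop :=
  ∀ X : C, IsGenerated H X

set_option linter.unusedSectionVars false

/-! ### Auxiliary lemmas -/

namespace WeightStructure

variable {C : Type u} [Category.{v} C] [Preadditive C] [HasZeroObject C]
  [HasShift C ℤ] [∀ n : ℤ, (shiftFunctor C n).Additive] [Pretriangulated C]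

lemma mem_shiftedSet_of_iso {S : Set C} {n : ℤ} {X Y : C} (e : X ≅ Y)
    (hY : Y ∈ shiftedSet S n) : X ∈ shiftedSet S n := by
  obtain ⟨A, hA, ⟨e'⟩⟩ := hY
  exact ⟨A, hA, ⟨e.trans e'⟩⟩

variable (w : WeightStructure C)

lemma le_of_iso {X Y : C} (e : X ≅ Y) (hY : Y ∈ w.le) : X ∈ w.le :=
  w.retract_le X Y e.hom e.inv e.hom_inv_id hY

lemma ge_of_iso {X Y : C} (e : X ≅ Y) (hY : Y ∈ w.ge) : X ∈ w.ge :=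
  w.retract_ge X Y e.hom e.inv e.hom_inv_id hY

lemma le_shift_nonpos {A : C} (hA : A ∈ w.le) : ∀ (k : ℤ), k ≤ 0 → A⟦k⟧ ∈ w.le := by
  have aux : ∀ (j : ℕ), A⟦-(j : ℤ)⟧ ∈ w.le := by
    intro j
    induction j with
    | zero => exact w.le_of_iso ((shiftFunctorZero C ℤ).app A) hA
    | succ j hj =>
      obtain ⟨B, hB, ⟨e⟩⟩ := w.le_shift hj
      refine w.le_of_iso (?_ ≪≫ (shiftFunctor C (-1 : ℤ)).mapIso e ≪≫
        (shiftFunctorCompIsoId C (1 : ℤ) (-1 : ℤ) (by omega)).app B) hB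
      exact (shiftFunctorAdd' C (-(j : ℤ)) (-1 : ℤ) (-((j+1 : ℕ) : ℤ)) (by push_cast; ring)).app A
  intro k hk
  have : k = -((-k).toNat : ℤ) := by omega
  rw [this]
  exact aux _

lemma ge_shift_nonneg {A : C} (hA : A ∈ w.ge) : ∀ (k : ℤ), 0 ≤ k → A⟦k⟧ ∈ w.ge := by
  have aux : ∀ (j : ℕ), A⟦(j : ℤ)⟧ ∈ w.ge := by
    intro j
    induction j with
    | zero => exact w.ge_of_iso ((shiftFunctorZero C ℤ).app A) hA
    | succ j hj =>
      refine w.ge_shift ⟨A⟦(j : ℤ)⟧, hj,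
        ⟨(shiftFunctorAdd' C (j : ℤ) (1 : ℤ) ((j+1 : ℕ) : ℤ) (by push_cast; ring)).app A⟩⟩
  intro k hk
  have : k = (k.toNat : ℤ) := by omega
  rw [this]
  exact aux _

lemma mem_wLE_shift {A : C} (hA : A ∈ w.le) {i n : ℤ} (h : i ≤ n) : A⟦i⟧ ∈ w.wLE n :=
  ⟨A⟦i - n⟧, w.le_shift_nonpos hA (i - n) (by omega),
    ⟨(shiftFunctorAdd' C (i - n) n i (by ring)).app A⟩⟩

lemma mem_wGE_shift {A : C} (hA : A ∈ w.ge) {i n : ℤ} (h : n ≤ i) : A⟦i⟧ ∈ w.wGE n :=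
  ⟨A⟦i - n⟧, w.ge_shift_nonneg hA (i - n) (by omega),
    ⟨(shiftFunctorAdd' C (i - n) n i (by ring)).app A⟩⟩

lemma le_mem_wLE {X : C} (h : X ∈ w.le) {n : ℤ} (hn : 0 ≤ n) : X ∈ w.wLE n :=
  mem_shiftedSet_of_iso ((shiftFunctorZero C ℤ).symm.app X) (w.mem_wLE_shift h hn)

lemma ge_mem_wGE {X : C} (h : X ∈ w.ge) {n : ℤ} (hn : n ≤ 0) : X ∈ w.wGE n :=
  mem_shiftedSet_of_iso ((shiftFunctorZero C ℤ).symm.app X) (w.mem_wGE_shift h hn)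

lemma wLE_mono {m n : ℤ} (h : m ≤ n) : w.wLE m ⊆ w.wLE n := by
  rintro X ⟨A, hA, ⟨e⟩⟩
  exact mem_shiftedSet_of_iso e (w.mem_wLE_shift hA h)

lemma wGE_anti {m n : ℤ} (h : n ≤ m) : w.wGE m ⊆ w.wGE n := by
  rintro X ⟨A, hA, ⟨e⟩⟩
  exact mem_shiftedSet_of_iso e (w.mem_wGE_shift hA h)

lemma wLE_shift_mem {X : C} {m : ℤ} (hX : X ∈ w.wLE m) (k n : ℤ) (h : m + k = n) :
    X⟦k⟧ ∈ w.wLE n := by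
  obtain ⟨A, hA, ⟨e⟩⟩ := hX
  refine mem_shiftedSet_of_iso ((shiftFunctor C k).mapIso e ≪≫
    ((shiftFunctorAdd' C m k n h).app A).symm) (w.mem_wLE_shift hA le_rfl)

lemma wGE_shift_mem {X : C} {m : ℤ} (hX : X ∈ w.wGE m) (k n : ℤ) (h : m + k = n) :
    X⟦k⟧ ∈ w.wGE n := by
  obtain ⟨A, hA, ⟨e⟩⟩ := hX
  refine mem_shiftedSet_of_iso ((shiftFunctor C k).mapIso e ≪≫
    ((shiftFunctorAdd' C m k n h).app A).symm) (w.mem_wGE_shift hA le_rfl)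

lemma hom_zero {X Y : C} {m n : ℤ} (hX : X ∈ w.wLE m) (hY : Y ∈ w.wGE n) (h : m < n)
    (f : X ⟶ Y) : f = 0 := by
  obtain ⟨A, hA, ⟨eX⟩⟩ := hX
  obtain ⟨B, hB, ⟨eY⟩⟩ := hY
  have hg : eX.inv ≫ f ≫ eY.hom = 0 := by
    set g : A⟦m⟧ ⟶ B⟦n⟧ := eX.inv ≫ f ≫ eY.hom
    obtain ⟨g', hg'⟩ := (shiftFunctor C m).map_surjective
      (g ≫ ((shiftFunctorAdd' C (n - m) m n (by ring)).app B).hom)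
    have hB' : B⟦n - m⟧ ∈ shiftedSet w.ge 1 :=
      ⟨B⟦n - m - 1⟧, w.ge_shift_nonneg hB (n - m - 1) (by omega),
        ⟨(shiftFunctorAdd' C (n - m - 1) (1 : ℤ) (n - m) (by ring)).app B⟩⟩
    have : g' = 0 := w.orth A (B⟦n - m⟧) hA hB' g'
    rw [this, Functor.map_zero] at hg'
    rw [← cancel_mono ((shiftFunctorAdd' C (n - m) m n (by ring)).app B).hom, zero_comp]
    exact hg'.symm
  calc f = eX.hom ≫ (eX.inv ≫ f ≫ eY.hom) ≫ eY.inv := by simp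
  _ = 0 := by rw [hg]; simp

end WeightStructure

namespace WeightStructure

variable {C : Type u} [Category.{v} C] [Preadditive C] [HasZeroObject C]
  [HasShift C ℤ] [∀ n : ℤ, (shiftFunctor C n).Additive] [Pretriangulated C]
variable (w : WeightStructure C)

lemma mem_wLE_of_orth {X : C} (n : ℤ)
    (h : ∀ G, G ∈ w.wGE (n + 1) → ∀ f : X ⟶ G, f = 0) : X ∈ w.wLE n := by
  obtain ⟨A, B, a, b, δ, hT, hA, hB⟩ := w.exists_wf (X⟦-n⟧)
  have hb : b = 0 := by
    have hB' : B⟦n⟧ ∈ w.wGE (n + 1) := w.wGE_shift_mem hB n (n + 1) (by ring)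
    have h0 := h (B⟦n⟧) hB'
      (((shiftFunctorCompIsoId C (-n) n (by ring)).inv.app X) ≫ (shiftFunctor C n).map b)
    apply (shiftFunctor C n).map_injective
    rw [Functor.map_zero]
    rw [← cancel_epi ((shiftFunctorCompIsoId C (-n) n (by ring)).inv.app X), h0, comp_zero]
  obtain ⟨g, hg⟩ := Triangle.coyoneda_exact₂ _ hT (𝟙 (X⟦(-n : ℤ)⟧)) (by
    change 𝟙 _ ≫ b = 0; rw [hb, comp_zero])
  have hXn : X⟦(-n : ℤ)⟧ ∈ w.le := w.retract_le _ A g a hg.symm hA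
  exact mem_shiftedSet_of_iso ((shiftFunctorCompIsoId C (-n) n (by ring)).symm.app X)
    (w.mem_wLE_shift hXn le_rfl)

lemma mem_wGE_of_orth {X : C} (n : ℤ)
    (h : ∀ L, L ∈ w.wLE (n - 1) → ∀ f : L ⟶ X, f = 0) : X ∈ w.wGE n := by
  obtain ⟨A, B, a, b, δ, hT, hA, hB⟩ := w.exists_wf (X⟦1 - n⟧)
  have ha : a = 0 := by
    have hA' : A⟦n - 1⟧ ∈ w.wLE (n - 1) := w.mem_wLE_shift hA le_rfl
    have h0 := h (A⟦n - 1⟧) hA'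
      ((shiftFunctor C (n - 1)).map a ≫ (shiftFunctorCompIsoId C (1 - n) (n - 1) (by ring)).hom.app X)
    apply (shiftFunctor C (n - 1)).map_injective
    rw [Functor.map_zero]
    rw [← cancel_mono ((shiftFunctorCompIsoId C (1 - n) (n - 1) (by ring)).hom.app X), h0,
      zero_comp]
  obtain ⟨g, hg⟩ : ∃ g : B ⟶ X⟦(1 - n : ℤ)⟧, 𝟙 _ = b ≫ g :=
    Triangle.yoneda_exact₂ _ hT (𝟙 (X⟦(1 - n : ℤ)⟧)) (by
    change a ≫ 𝟙 _ = 0; rw [ha, zero_comp])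
  -- hg : 𝟙 _ = b ≫ g ; so X⟦1-n⟧ is a retract of B, with B ≅ B'⟦1⟧, B' ∈ w.ge
  obtain ⟨B', hB', ⟨eB⟩⟩ := hB
  have hZ : (X⟦(1 - n : ℤ)⟧)⟦(-1 : ℤ)⟧ ∈ w.ge := by
    refine w.retract_ge _ B'
      ((shiftFunctor C (-1 : ℤ)).map (b ≫ eB.hom) ≫
        (shiftFunctorCompIsoId C (1 : ℤ) (-1 : ℤ) (by omega)).hom.app B')
      ((shiftFunctorCompIsoId C (1 : ℤ) (-1 : ℤ) (by omega)).inv.app B' ≫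
        (shiftFunctor C (-1 : ℤ)).map (eB.inv ≫ g)) ?_ hB'
    rw [Category.assoc, Iso.hom_inv_id_app_assoc, ← Functor.map_comp]
    have : (b ≫ eB.hom) ≫ eB.inv ≫ g = 𝟙 _ := by
      rw [Category.assoc, Iso.hom_inv_id_assoc]; exact hg.symm
    rw [this, CategoryTheory.Functor.map_id]
  refine mem_shiftedSet_of_iso ?_ (w.mem_wGE_shift hZ (le_refl n))
  exact (shiftFunctorCompIsoId C (1 - n) (n - 1) (by ring)).symm.app X ≪≫
    (shiftFunctorAdd' C (-1 : ℤ) n (n - 1) (by ring)).app (X⟦(1 - n : ℤ)⟧)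

lemma wLE_ext (T : Triangle C) (hT : T ∈ distTriang C) (n : ℤ)
    (h1 : T.obj₁ ∈ w.wLE n) (h3 : T.obj₃ ∈ w.wLE n) : T.obj₂ ∈ w.wLE n := by
  refine w.mem_wLE_of_orth n (fun G hG f => ?_)
  obtain ⟨g, hg⟩ := Triangle.yoneda_exact₂ _ hT f (w.hom_zero h1 hG (by omega) _)
  rw [hg, w.hom_zero h3 hG (by omega) g, comp_zero]

lemma wGE_ext (T : Triangle C) (hT : T ∈ distTriang C) (n : ℤ)
    (h1 : T.obj₁ ∈ w.wGE n) (h3 : T.obj₃ ∈ w.wGE n) : T.obj₂ ∈ w.wGE n := by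
  refine w.mem_wGE_of_orth n (fun L hL f => ?_)
  obtain ⟨g, hg⟩ := Triangle.coyoneda_exact₂ _ hT f (w.hom_zero hL h3 (by omega) _)
  rw [hg, w.hom_zero hL h1 (by omega) g, zero_comp]

lemma zero_mem_wLE {Z : C} (hZ : Limits.IsZero Z) (n : ℤ) : Z ∈ w.wLE n :=
  w.mem_wLE_of_orth n (fun _ _ f => hZ.eq_zero_of_src f)

lemma zero_mem_wGE {Z : C} (hZ : Limits.IsZero Z) (n : ℤ) : Z ∈ w.wGE n :=
  w.mem_wGE_of_orth n (fun _ _ f => hZ.eq_zero_of_tgt f)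

end WeightStructure

namespace WeightStructure

variable {C : Type u} [Category.{v} C] [Preadditive C] [HasZeroObject C]
  [HasShift C ℤ] [∀ n : ℤ, (shiftFunctor C n).Additive] [Pretriangulated C]
variable (w : WeightStructure C)

/-- Morphisms from objects of weights `≤ c` into the target factor through `u`. -/
def FactorThruVia (c : ℤ) {A B : C} (u : A ⟶ B) : Prop :=
  ∀ L, L ∈ w.wLE c → ∀ φ : L ⟶ B, ∃ ψ : L ⟶ A, ψ ≫ u = φ

/-- Post-composition with `u` is injective on morphisms from objects of weights `≤ c`. -/
def InjVia (c : ℤ) {A B : C} (u : A ⟶ B) : Prop :=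
  ∀ L, L ∈ w.wLE c → ∀ φ : L ⟶ A, φ ≫ u = 0 → φ = 0

/-- Morphisms to objects of weights `≥ c` from the source extend along `u`. -/
def CoFactorThruVia (c : ℤ) {A B : C} (u : A ⟶ B) : Prop :=
  ∀ G, G ∈ w.wGE c → ∀ φ : A ⟶ G, ∃ ψ : B ⟶ G, u ≫ ψ = φ

/-- Pre-composition with `u` is injective on morphisms to objects of weights `≥ c`. -/
def CoInjVia (c : ℤ) {A B : C} (u : A ⟶ B) : Prop :=
  ∀ G, G ∈ w.wGE c → ∀ φ : B ⟶ G, u ≫ φ = 0 → φ = 0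

variable {w}

lemma FactorThruVia.mono {c c' : ℤ} {A B : C} {u : A ⟶ B} (h : w.FactorThruVia c u)
    (hc : c' ≤ c) : w.FactorThruVia c' u :=
  fun L hL φ => h L (w.wLE_mono hc hL) φ

lemma CoFactorThruVia.mono {c c' : ℤ} {A B : C} {u : A ⟶ B} (h : w.CoFactorThruVia c u)
    (hc : c ≤ c') : w.CoFactorThruVia c' u :=
  fun G hG φ => h G (w.wGE_anti hc hG) φ

lemma FactorThruVia.shift {c : ℤ} {A B : C} {u : A ⟶ B} (h : w.FactorThruVia c u)
    (n c' : ℤ) (hc : c + n = c') :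
    w.FactorThruVia c' ((shiftFunctor C n).map u) := by
  intro L hL φ
  set e := shiftFunctorCompIsoId C n (-n) (by omega) with he
  have hL' : L⟦(-n : ℤ)⟧ ∈ w.wLE c := w.wLE_shift_mem hL (-n) c (by omega)
  obtain ⟨ψ', hψ'⟩ := h _ hL' ((shiftFunctor C (-n)).map φ ≫ e.hom.app B)
  refine ⟨(shiftFunctor C (-n)).preimage (ψ' ≫ e.inv.app A), ?_⟩
  apply (shiftFunctor C (-n)).map_injective
  rw [Functor.map_comp, Functor.map_preimage, ← cancel_mono (e.hom.app B), Category.assoc,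
    Category.assoc]
  have nat : (shiftFunctor C (-n)).map ((shiftFunctor C n).map u) ≫ e.hom.app B =
      e.hom.app A ≫ u := e.hom.naturality u
  rw [nat, Iso.inv_hom_id_app_assoc, hψ']

lemma InjVia.shift {c : ℤ} {A B : C} {u : A ⟶ B} (h : w.InjVia c u)
    (n c' : ℤ) (hc : c + n = c') :
    w.InjVia c' ((shiftFunctor C n).map u) := by
  intro L hL φ hφ
  set e := shiftFunctorCompIsoId C n (-n) (by omega) with he
  have hL' : L⟦(-n : ℤ)⟧ ∈ w.wLE c := w.wLE_shift_mem hL (-n) c (by omega)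
  have h0 : ((shiftFunctor C (-n)).map φ ≫ e.hom.app A) ≫ u = 0 := by
    have nat : (shiftFunctor C (-n)).map ((shiftFunctor C n).map u) ≫ e.hom.app B =
        e.hom.app A ≫ u := e.hom.naturality u
    rw [Category.assoc, ← nat, ← Functor.map_comp_assoc, hφ, Functor.map_zero, zero_comp]
  have := h _ hL' _ h0
  have hφ' : (shiftFunctor C (-n)).map φ = 0 := by
    rw [← cancel_mono (e.hom.app A), this, zero_comp]
  apply (shiftFunctor C (-n)).map_injective
  rw [hφ', Functor.map_zero]

lemma CoFactorThruVia.shift {c : ℤ} {A B : C} {u : A ⟶ B} (h : w.CoFactorThruVia c u)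
    (n c' : ℤ) (hc : c + n = c') :
    w.CoFactorThruVia c' ((shiftFunctor C n).map u) := by
  intro G hG φ
  set e := shiftFunctorCompIsoId C n (-n) (by omega) with he
  have hG' : G⟦(-n : ℤ)⟧ ∈ w.wGE c := w.wGE_shift_mem hG (-n) c (by omega)
  obtain ⟨ψ', hψ'⟩ := h _ hG' (e.inv.app A ≫ (shiftFunctor C (-n)).map φ)
  refine ⟨(shiftFunctor C (-n)).preimage (e.hom.app B ≫ ψ'), ?_⟩
  apply (shiftFunctor C (-n)).map_injective
  rw [Functor.map_comp, Functor.map_preimage]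
  have nat : (shiftFunctor C (-n)).map ((shiftFunctor C n).map u) ≫ e.hom.app B =
      e.hom.app A ≫ u := e.hom.naturality u
  rw [← Category.assoc, nat, Category.assoc, hψ', Iso.hom_inv_id_app_assoc]

lemma CoInjVia.shift {c : ℤ} {A B : C} {u : A ⟶ B} (h : w.CoInjVia c u)
    (n c' : ℤ) (hc : c + n = c') :
    w.CoInjVia c' ((shiftFunctor C n).map u) := by
  intro G hG φ hφ
  set e := shiftFunctorCompIsoId C n (-n) (by omega) with he
  have hG' : G⟦(-n : ℤ)⟧ ∈ w.wGE c := w.wGE_shift_mem hG (-n) c (by omega)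
  have nat : (shiftFunctor C (-n)).map ((shiftFunctor C n).map u) ≫ e.hom.app B =
      e.hom.app A ≫ u := e.hom.naturality u
  have h0 : u ≫ e.inv.app B ≫ (shiftFunctor C (-n)).map φ = 0 := by
    have : e.inv.app A ≫ (shiftFunctor C (-n)).map ((shiftFunctor C n).map u) =
        u ≫ e.inv.app B := by
      rw [← cancel_mono (e.hom.app B)]
      simp only [Category.assoc, nat, Iso.inv_hom_id_app_assoc, Iso.inv_hom_id_app]
      simp
    rw [← Category.assoc, ← this, Category.assoc, ← Functor.map_comp, hφ, Functor.map_zero,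
      comp_zero]
  have := h _ hG' _ h0
  have hφ' : (shiftFunctor C (-n)).map φ = 0 := by
    rw [← cancel_epi (e.inv.app B), this, comp_zero]
  apply (shiftFunctor C (-n)).map_injective
  rw [hφ', Functor.map_zero]

end WeightStructure

namespace CategoryTheory.Pretriangulated

variable {C : Type u} [Category.{v} C] [Preadditive C] [HasZeroObject C]
  [HasShift C ℤ] [∀ n : ℤ, (shiftFunctor C n).Additive] [Pretriangulated C]

lemma invRotate_mor₁_comm {T₁ T₂ : Triangle C} (a : T₁.obj₁ ⟶ T₂.obj₁) (c : T₁.obj₃ ⟶ T₂.obj₃)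
    (comm : T₁.mor₃ ≫ (shiftFunctor C (1 : ℤ)).map a = c ≫ T₂.mor₃) :
    T₁.invRotate.mor₁ ≫ a = (shiftFunctor C (-1 : ℤ)).map c ≫ T₂.invRotate.mor₁ := by
  change (-((shiftFunctor C (-1 : ℤ)).map T₁.mor₃ ≫
      (shiftFunctorCompIsoId C (1 : ℤ) (-1 : ℤ) (add_neg_cancel 1)).hom.app T₁.obj₁)) ≫ a =
    (shiftFunctor C (-1 : ℤ)).map c ≫ (-((shiftFunctor C (-1 : ℤ)).map T₂.mor₃ ≫
      (shiftFunctorCompIsoId C (1 : ℤ) (-1 : ℤ) (add_neg_cancel 1)).hom.app T₂.obj₁))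
  rw [Preadditive.neg_comp, Preadditive.comp_neg, neg_inj, Category.assoc]
  have nat := (shiftFunctorCompIsoId C (1 : ℤ) (-1 : ℤ) (add_neg_cancel 1)).hom.naturality a
  dsimp at nat
  rw [← nat, ← Functor.map_comp_assoc, comm, Functor.map_comp, Category.assoc]

end CategoryTheory.Pretriangulated

section ExtClosure

open ZeroObject

variable {C : Type u} [Category.{v} C] [Preadditive C] [HasZeroObject C]
  [HasShift C ℤ] [∀ n : ℤ, (shiftFunctor C n).Additive] [Pretriangulated C]

/-- The closure of a class of objects under isomorphisms and extensions. -/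
inductive ExtClosure (S : Set C) : C → Prop
  | of {X : C} (hX : X ∈ S) : ExtClosure S X
  | iso {X Y : C} (e : X ≅ Y) (hY : ExtClosure S Y) : ExtClosure S X
  | ext (T : Triangle C) (hT : T ∈ distTriang C) (h1 : ExtClosure S T.obj₁)
      (h3 : ExtClosure S T.obj₃) : ExtClosure S T.obj₂

lemma ExtClosure.mono {S S' : Set C} (h : S ⊆ S') {X : C} (hX : ExtClosure S X) :
    ExtClosure S' X := by
  induction hX with
  | of h' => exact ExtClosure.of (h h')
  | iso e _ ih => exact ExtClosure.iso e ih
  | ext T hT _ _ ih1 ih3 => exact ExtClosure.ext T hT ih1 ih3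

/-- Shifts of objects of `H` in the range `[a, b]`. -/
def piecesSet (H : Set C) (a b : ℤ) : Set C :=
  {X | ∃ M ∈ H, ∃ i : ℤ, a ≤ i ∧ i ≤ b ∧ Nonempty (X ≅ M⟦i⟧)}

lemma piecesSet_mono {H : Set C} {a b a' b' : ℤ} (ha : a' ≤ a) (hb : b ≤ b') :
    piecesSet H a b ⊆ piecesSet H a' b' := by
  rintro X ⟨M, hM, i, h1, h2, he⟩
  exact ⟨M, hM, i, by omega, by omega, he⟩

lemma ExtClosure.shiftPieces {H : Set C} {a b : ℤ} {X : C}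
    (hX : ExtClosure (piecesSet H a b) X) (n : ℤ) :
    ExtClosure (piecesSet H (a + n) (b + n)) (X⟦n⟧) := by
  induction hX with
  | @of X h' =>
    obtain ⟨M, hM, i, h1, h2, ⟨e⟩⟩ := h'
    exact ExtClosure.of ⟨M, hM, i + n, by omega, by omega,
      ⟨(shiftFunctor C n).mapIso e ≪≫ ((shiftFunctorAdd' C i n (i + n) rfl).app M).symm⟩⟩
  | iso e _ ih => exact ExtClosure.iso ((shiftFunctor C n).mapIso e) ih
  | ext T hT _ _ ih1 ih3 =>
    exact ExtClosure.ext _ (Pretriangulated.Triangle.shift_distinguished T hT n) ih1 ih3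

lemma isGenerated_extClosure {H : Set C} {X : C} (hX : IsGenerated H X) :
    ∃ a b : ℤ, a ≤ 0 ∧ 0 ≤ b ∧ ExtClosure (piecesSet H a b) X := by
  induction hX with
  | @of X h' =>
    exact ⟨0, 0, le_refl _, le_refl _,
      ExtClosure.of ⟨X, h', 0, le_refl _, le_refl _, ⟨((shiftFunctorZero C ℤ).app X).symm⟩⟩⟩
  | iso e _ ih =>
    obtain ⟨a, b, ha, hb, h⟩ := ih
    exact ⟨a, b, ha, hb, ExtClosure.iso e.symm h⟩
  | @shift X n _ ih =>
    obtain ⟨a, b, ha, hb, h⟩ := ih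
    exact ⟨min (a + n) 0, max (b + n) 0, by omega, by omega,
      ExtClosure.mono (piecesSet_mono (by omega) (by omega)) (h.shiftPieces n)⟩
  | @cone X Y Z f g h hT _ _ ihX ihY =>
    obtain ⟨a1, b1, ha1, hb1, h1⟩ := ihX
    obtain ⟨a2, b2, ha2, hb2, h2⟩ := ihY
    refine ⟨min (a1 + 1) a2, max (b1 + 1) b2, by omega, by omega, ?_⟩
    have hrot := Pretriangulated.rot_of_distTriang _ hT
    exact ExtClosure.ext _ hrot
      (ExtClosure.mono (piecesSet_mono (by omega) (by omega)) h2)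
      (ExtClosure.mono (piecesSet_mono (by omega) (by omega))
        (h1.shiftPieces 1))

lemma ExtClosure.mem_wLE {H : Set C} (w : WeightStructure C) (hw : H ⊆ w.heart)
    {a b : ℤ} {X : C} (hX : ExtClosure (piecesSet H a b) X) : X ∈ w.wLE b := by
  induction hX with
  | of h' =>
    obtain ⟨M, hM, i, _, h2, ⟨e⟩⟩ := h'
    exact WeightStructure.mem_shiftedSet_of_iso e (w.mem_wLE_shift (hw hM).1 h2)
  | iso e _ ih => exact WeightStructure.mem_shiftedSet_of_iso e ih
  | ext T hT _ _ ih1 ih3 => exact w.wLE_ext T hT b ih1 ih3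

lemma ExtClosure.mem_wGE {H : Set C} (w : WeightStructure C) (hw : H ⊆ w.heart)
    {a b : ℤ} {X : C} (hX : ExtClosure (piecesSet H a b) X) : X ∈ w.wGE a := by
  induction hX with
  | of h' =>
    obtain ⟨M, hM, i, h1, _, ⟨e⟩⟩ := h'
    exact WeightStructure.mem_shiftedSet_of_iso e (w.mem_wGE_shift (hw hM).2 h1)
  | iso e _ ih => exact WeightStructure.mem_shiftedSet_of_iso e ih
  | ext T hT _ _ ih1 ih3 => exact w.wGE_ext T hT a ih1 ih3

lemma IsAdditiveSubcategory.zero_mem {H : Set C} (hadd : IsAdditiveSubcategory H) :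
    (0 : C) ∈ H :=
  hadd.1 _ (Limits.isZero_zero C)

lemma IsAdditiveSubcategory.mem_of_iso {H : Set C} (hadd : IsAdditiveSubcategory H)
    {X Y : C} (e : X ≅ Y) (hY : Y ∈ H) : X ∈ H := by
  refine hadd.2 Y 0 X hY hadd.zero_mem e.inv (0 : (0 : C) ⟶ X) e.hom (0 : X ⟶ (0 : C))
    e.inv_hom_id ?_ (by simp) (by simp) (by simp)
  exact (Limits.isZero_zero C).eq_of_src _ _

/-- The heart contains `H` and `H` is additive: the extension closure of `H`-pieces
in degree `0` is contained in `H`. -/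
lemma extClosure_zero_subset {H : Set C} (hadd : IsAdditiveSubcategory H)
    (w : WeightStructure C) (hw : H ⊆ w.heart) {Y : C}
    (hY : ExtClosure (piecesSet H 0 0) Y) : Y ∈ H := by
  induction hY with
  | of h' =>
    obtain ⟨M, hM, i, h1, h2, ⟨e⟩⟩ := h'
    obtain rfl : i = 0 := by omega
    exact hadd.mem_of_iso (e ≪≫ (shiftFunctorZero C ℤ).app M) hM
  | iso e _ ih => exact hadd.mem_of_iso e ih
  | ext T hT h1 h3 ih1 ih3 =>
    have hzero : T.mor₃ = 0 := by
      refine w.hom_zero (m := 0) (n := 1) ?_ ?_ (by omega) T.mor₃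
      · exact w.le_mem_wLE (hw ih3).1 le_rfl
      · exact w.mem_wGE_shift (hw ih1).2 le_rfl
    obtain ⟨e, he1, he2⟩ :=
      Pretriangulated.exists_iso_binaryBiproduct_of_distTriang T hT hzero
    have hmor₁ : T.mor₁ = Limits.biprod.inl ≫ e.inv := by
      rw [← he1, Category.assoc, e.hom_inv_id, Category.comp_id]
    refine hadd.2 T.obj₁ T.obj₃ T.obj₂ ih1 ih3 T.mor₁ (Limits.biprod.inr ≫ e.inv)
      (e.hom ≫ Limits.biprod.fst) T.mor₂ ?_ ?_ ?_ ?_ ?_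
    · rw [← Category.assoc, he1]; simp
    · rw [Category.assoc, he2]; simp
    · exact Pretriangulated.comp_distTriang_mor_zero₁₂ T hT
    · rw [Category.assoc, ← Category.assoc e.inv, e.inv_hom_id]; simp
    · rw [hmor₁, he2]
      simp only [Category.assoc]
      rw [← Preadditive.comp_add, ← Category.assoc Limits.biprod.fst,
        ← Category.assoc Limits.biprod.snd, ← Preadditive.add_comp, Limits.biprod.total,
        Category.id_comp, e.hom_inv_id]

end ExtClosure

section Strip

open ZeroObject WeightStructure CategoryTheory.Pretriangulated

variable {C : Type u} [Category.{v} C] [Preadditive C] [HasZeroObject C]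
  [HasShift C ℤ] [∀ n : ℤ, (shiftFunctor C n).Additive] [Pretriangulated C]
variable {H : Set C} (hadd : IsAdditiveSubcategory H)
  (w : WeightStructure C) (hw : H ⊆ w.heart)

include hadd hw in
lemma strip_top (a b : ℤ) (hab : a ≤ b - 1) :
    ∀ Y, ExtClosure (piecesSet H a b) Y →
      ∃ N, ExtClosure (piecesSet H a (b - 1)) N ∧ ∃ m : N ⟶ Y,
        w.FactorThruVia (b - 1) m ∧ w.InjVia (b - 2) m := by
  intro Y hY
  induction hY with
  | @of Y h' =>
    obtain ⟨M, hM, i, h1, h2, ⟨e⟩⟩ := h'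
    by_cases hib : i ≤ b - 1
    · exact ⟨Y, ExtClosure.of ⟨M, hM, i, h1, hib, ⟨e⟩⟩, 𝟙 Y,
        fun L _ φ => ⟨φ, Category.comp_id φ⟩,
        fun L _ φ hφ => by simpa using hφ⟩
    · have hzero : Limits.IsZero ((0 : C)⟦a⟧) :=
        (shiftFunctor C a).map_isZero (Limits.isZero_zero C)
      have hYGE : Y ∈ w.wGE b :=
        WeightStructure.mem_shiftedSet_of_iso e (w.mem_wGE_shift (hw hM).2 (by omega))
      refine ⟨0, ExtClosure.of ⟨0, hadd.zero_mem, a, le_refl _, hab,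
        ⟨(Limits.isZero_zero C).iso hzero⟩⟩, 0, fun L hL φ => ⟨0, ?_⟩,
        fun L _ φ _ => (Limits.isZero_zero C).eq_zero_of_tgt φ⟩
      have hφ : φ = 0 := w.hom_zero hL hYGE (by omega) φ
      rw [hφ, comp_zero]
  | @iso X Y e _ ih =>
    obtain ⟨N, hN, m, FA, FB⟩ := ih
    refine ⟨N, hN, m ≫ e.inv, fun L hL φ => ?_, fun L hL φ hφ => ?_⟩
    · obtain ⟨ψ, hψ⟩ := FA L hL (φ ≫ e.hom)
      exact ⟨ψ, by rw [← Category.assoc, hψ, Category.assoc, e.hom_inv_id, Category.comp_id]⟩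
    · refine FB L hL φ ?_
      rw [← Category.assoc] at hφ
      rw [← cancel_mono e.inv, zero_comp]
      exact hφ
  | @ext T hT h1 h3 ih1 ih3 =>
    obtain ⟨N₁, hN1, m₁, FA1, FB1⟩ := ih1
    obtain ⟨N₂, hN2, m₂, FA2, FB2⟩ := ih3
    have hN2LE : N₂ ∈ w.wLE b := w.wLE_mono (by omega) (hN2.mem_wLE w hw)
    obtain ⟨ν, hν⟩ := (FA1.shift 1 b (by omega)) N₂ hN2LE (m₂ ≫ T.mor₃)
    obtain ⟨N, j, k, hTN⟩ := Pretriangulated.distinguished_cocone_triangle₂ ν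
    obtain ⟨m, hm1, hm2⟩ : ∃ m : N ⟶ T.obj₂, j ≫ m = m₁ ≫ T.mor₁ ∧ k ≫ m₂ = m ≫ T.mor₂ :=
      Pretriangulated.complete_distinguished_triangle_morphism₂
      (Triangle.mk j k ν) T hTN hT m₁ m₂ hν
    replace hm1 : j ≫ m = m₁ ≫ T.mor₁ := hm1
    replace hm2 : k ≫ m₂ = m ≫ T.mor₂ := hm2
    refine ⟨N, ExtClosure.ext (Triangle.mk j k ν) hTN hN1 hN2, m, ?_, ?_⟩
    · -- factorization property
      intro L hL φ
      obtain ⟨ρ, hρ⟩ := FA2 L hL (φ ≫ T.mor₂)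
      have hρν : ρ ≫ ν = 0 := by
        refine (FB1.shift 1 (b - 1) (by omega)) L hL (ρ ≫ ν) ?_
        rw [Category.assoc, hν, ← Category.assoc, hρ, Category.assoc,
          Pretriangulated.comp_distTriang_mor_zero₂₃ T hT, comp_zero]
      obtain ⟨ψ₀, hψ₀⟩ : ∃ ψ₀ : L ⟶ N, ρ = ψ₀ ≫ k :=
        Pretriangulated.Triangle.coyoneda_exact₃ _ hTN ρ hρν
      replace hψ₀ : ρ = ψ₀ ≫ k := hψ₀
      have hdiff : (φ - ψ₀ ≫ m) ≫ T.mor₂ = 0 := by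
        have : ψ₀ ≫ m ≫ T.mor₂ = φ ≫ T.mor₂ := by
          rw [← hm2, ← Category.assoc, ← hψ₀, hρ]
        rw [Preadditive.sub_comp, Category.assoc, this, sub_self]
      obtain ⟨σ, hσ⟩ := Pretriangulated.Triangle.coyoneda_exact₂ T hT (φ - ψ₀ ≫ m) hdiff
      obtain ⟨τ, hτ⟩ := FA1 L hL σ
      refine ⟨(show L ⟶ N from ψ₀) + τ ≫ j, ?_⟩
      rw [Preadditive.add_comp, Category.assoc, hm1, ← Category.assoc, hτ, ← hσ]
      abel
    · -- injectivity property
      intro L hL φ hφ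
      have hφk : φ ≫ k = 0 := by
        refine FB2 L hL _ ?_
        rw [Category.assoc, hm2, ← Category.assoc, hφ, zero_comp]
      obtain ⟨y, hy⟩ : ∃ y : L ⟶ N₁, φ = y ≫ j :=
        Pretriangulated.Triangle.coyoneda_exact₂ _ hTN φ hφk
      replace hy : φ = y ≫ j := hy
      have hym : (y ≫ m₁) ≫ T.mor₁ = 0 := by
        rw [Category.assoc, ← hm1, ← Category.assoc, ← hy, hφ]
      obtain ⟨z, hz⟩ := Pretriangulated.Triangle.coyoneda_exact₂ _
        (Pretriangulated.inv_rot_of_distTriang T hT) (y ≫ m₁) hym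
      obtain ⟨ρ', hρ'⟩ := (FA2.shift (-1) (b - 2) (by omega)) L hL z
      let ι₁ : (shiftFunctor C (-1 : ℤ)).obj N₂ ⟶ N₁ :=
        (Triangle.mk j k ν).invRotate.mor₁
      have hsq : ι₁ ≫ m₁ = (shiftFunctor C (-1 : ℤ)).map m₂ ≫ T.invRotate.mor₁ :=
        Pretriangulated.invRotate_mor₁_comm (T₁ := Triangle.mk j k ν) (T₂ := T) m₁ m₂
          hν
      have hy0 : (y - ρ' ≫ ι₁) ≫ m₁ = 0 := by
        erw [Preadditive.sub_comp, Category.assoc, hsq, ← Category.assoc, hρ', ← hz, sub_self]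
      have hy' : y = ρ' ≫ ι₁ := by
        have := FB1 L hL _ hy0
        rwa [sub_eq_zero] at this
      have hj0 : ι₁ ≫ j = 0 := Pretriangulated.comp_distTriang_mor_zero₁₂ _
          (Pretriangulated.inv_rot_of_distTriang _ hTN)
      rw [hy, hy', Category.assoc, hj0, comp_zero]

include hadd hw in
lemma strip_bottom (a b : ℤ) (hab : a + 1 ≤ b) :
    ∀ Y, ExtClosure (piecesSet H a b) Y →
      ∃ M, ExtClosure (piecesSet H (a + 1) b) M ∧ ∃ m : Y ⟶ M,
        w.CoFactorThruVia (a + 1) m ∧ w.CoInjVia (a + 2) m := by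
  intro Y hY
  induction hY with
  | @of Y h' =>
    obtain ⟨M, hM, i, h1, h2, ⟨e⟩⟩ := h'
    by_cases hia : a + 1 ≤ i
    · exact ⟨Y, ExtClosure.of ⟨M, hM, i, hia, h2, ⟨e⟩⟩, 𝟙 Y,
        fun G _ φ => ⟨φ, Category.id_comp φ⟩,
        fun G _ φ hφ => by simpa using hφ⟩
    · have hzero : Limits.IsZero ((0 : C)⟦b⟧) :=
        (shiftFunctor C b).map_isZero (Limits.isZero_zero C)
      have hYLE : Y ∈ w.wLE a :=
        WeightStructure.mem_shiftedSet_of_iso e (w.mem_wLE_shift (hw hM).1 (by omega))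
      refine ⟨0, ExtClosure.of ⟨0, hadd.zero_mem, b, hab, le_refl _,
        ⟨(Limits.isZero_zero C).iso hzero⟩⟩, 0, fun G hG φ => ⟨0, ?_⟩,
        fun G _ φ _ => (Limits.isZero_zero C).eq_zero_of_src φ⟩
      have hφ : φ = 0 := w.hom_zero hYLE hG (by omega) φ
      rw [hφ, comp_zero]
  | @iso X Y e _ ih =>
    obtain ⟨M, hM, m, FA, FB⟩ := ih
    refine ⟨M, hM, e.hom ≫ m, fun G hG φ => ?_, fun G hG φ hφ => ?_⟩
    · obtain ⟨ψ, hψ⟩ := FA G hG (e.inv ≫ φ)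
      exact ⟨ψ, by rw [Category.assoc, hψ, e.hom_inv_id_assoc]⟩
    · refine FB G hG φ ?_
      rw [Category.assoc] at hφ
      rw [← cancel_epi e.hom, comp_zero]
      exact hφ
  | @ext T hT h1 h3 ih1 ih3 =>
    obtain ⟨M₁, hM1, m₁, FA1, FB1⟩ := ih1
    obtain ⟨M₂, hM2, m₂, FA2, FB2⟩ := ih3
    have hM1GE : M₁⟦(1 : ℤ)⟧ ∈ w.wGE (a + 1) :=
      w.wGE_anti (by omega) (w.wGE_shift_mem (hM1.mem_wGE w hw) 1 (a + 2) (by omega))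
    obtain ⟨ν, hν⟩ := FA2 (M₁⟦(1 : ℤ)⟧) hM1GE (T.mor₃ ≫ (shiftFunctor C (1 : ℤ)).map m₁)
    obtain ⟨M, j', k', hTM⟩ := Pretriangulated.distinguished_cocone_triangle₂ ν
    obtain ⟨m, hm1, hm2⟩ : ∃ m : T.obj₂ ⟶ M, T.mor₁ ≫ m = m₁ ≫ j' ∧ T.mor₂ ≫ m₂ = m ≫ k' :=
      Pretriangulated.complete_distinguished_triangle_morphism₂
      T (Triangle.mk j' k' ν) hT hTM m₁ m₂ hν.symm
    replace hm1 : T.mor₁ ≫ m = m₁ ≫ j' := hm1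
    replace hm2 : T.mor₂ ≫ m₂ = m ≫ k' := hm2
    refine ⟨M, ExtClosure.ext (Triangle.mk j' k' ν) hTM hM1 hM2, m, ?_, ?_⟩
    · -- factorization property
      intro G hG φ
      obtain ⟨ρ, hρ⟩ := FA1 G hG (T.mor₁ ≫ φ)
      let ι₁ : (shiftFunctor C (-1 : ℤ)).obj M₂ ⟶ M₁ :=
        (Triangle.mk j' k' ν).invRotate.mor₁
      have hνρ : ι₁ ≫ ρ = 0 := by
        refine (FB2.shift (-1) (a + 1) (by omega)) G hG _ ?_
        have hsq : T.invRotate.mor₁ ≫ m₁ = (shiftFunctor C (-1 : ℤ)).map m₂ ≫ ι₁ :=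
          Pretriangulated.invRotate_mor₁_comm (T₁ := T) (T₂ := Triangle.mk j' k' ν) m₁ m₂
            hν.symm
        erw [← Category.assoc, ← hsq, Category.assoc, hρ, ← Category.assoc]
        have h0 : T.invRotate.mor₁ ≫ T.mor₁ = 0 := Pretriangulated.comp_distTriang_mor_zero₁₂ _
            (Pretriangulated.inv_rot_of_distTriang _ hT)
        erw [h0, zero_comp]
      obtain ⟨ψ₀, hψ₀⟩ : ∃ ψ₀ : M ⟶ G, ρ = j' ≫ ψ₀ := Pretriangulated.Triangle.yoneda_exact₂ _
        (Pretriangulated.inv_rot_of_distTriang _ hTM) ρ hνρ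
      replace hψ₀ : ρ = j' ≫ ψ₀ := hψ₀
      have hdiff : T.mor₁ ≫ (φ - m ≫ ψ₀) = 0 := by
        have : T.mor₁ ≫ m ≫ ψ₀ = T.mor₁ ≫ φ := by
          rw [← Category.assoc, hm1, Category.assoc, ← hψ₀]
          exact hρ
        rw [Preadditive.comp_sub, this, sub_self]
      obtain ⟨σ, hσ⟩ := Pretriangulated.Triangle.yoneda_exact₂ T hT (φ - m ≫ ψ₀) hdiff
      obtain ⟨τ, hτ⟩ := FA2 G hG σ
      refine ⟨(show M ⟶ G from ψ₀) + k' ≫ τ, ?_⟩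
      rw [Preadditive.comp_add, ← Category.assoc, ← hm2, Category.assoc, hτ, ← hσ]
      abel
    · -- injectivity property
      intro G hG φ hφ
      have hj'0 : j' ≫ φ = 0 := by
        refine FB1 G hG _ ?_
        rw [← Category.assoc, ← hm1, Category.assoc, hφ, comp_zero]
      obtain ⟨y₀, hy⟩ : ∃ y₀ : M₂ ⟶ G, φ = k' ≫ y₀ :=
        Pretriangulated.Triangle.yoneda_exact₂ _ hTM φ hj'0
      let y : M₂ ⟶ G := y₀
      replace hy : φ = k' ≫ y := hy
      have h3y : T.mor₂ ≫ (m₂ ≫ y) = 0 := by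
        rw [← Category.assoc, hm2, Category.assoc, ← hy, hφ]
      obtain ⟨z, hz⟩ := Pretriangulated.Triangle.yoneda_exact₃ T hT (m₂ ≫ y) h3y
      obtain ⟨z', hz'⟩ := (FA1.shift 1 (a + 2) (by omega)) G hG z
      have hy0 : m₂ ≫ (y - ν ≫ z') = 0 := by
        rw [Preadditive.comp_sub, hz, ← hz', ← Category.assoc, ← hν, Category.assoc, sub_self]
      have hy' : y = ν ≫ z' := by
        have := FB2 G hG _ hy0
        rwa [sub_eq_zero] at this
      have hk0 : k' ≫ ν = 0 :=
        Pretriangulated.comp_distTriang_mor_zero₂₃ _ hTM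
      rw [hy, hy', ← Category.assoc, hk0, zero_comp]

end Strip

section Main

open WeightStructure

variable {C : Type u} [Category.{v} C] [Preadditive C] [HasZeroObject C]
  [HasShift C ℤ] [∀ n : ℤ, (shiftFunctor C n).Additive] [Pretriangulated C]
variable {H : Set C} (hadd : IsAdditiveSubcategory H)
  (w : WeightStructure C) (hw : H ⊆ w.heart)

include hadd hw in
lemma heart_retract_aux : ∀ (k : ℕ) (a b : ℤ), a ≤ 0 → 0 ≤ b → b - a ≤ k →
    ∀ Y, ExtClosure (piecesSet H a b) Y → ∀ X, X ∈ w.heart →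
    ∀ (i : X ⟶ Y) (r : Y ⟶ X), i ≫ r = 𝟙 X →
    ∃ M, M ∈ H ∧ ∃ (i' : X ⟶ M) (r' : M ⟶ X), i' ≫ r' = 𝟙 X := by
  intro k
  induction k with
  | zero =>
    intro a b ha hb hk Y hY X _ i r hir
    obtain rfl : a = 0 := by omega
    obtain rfl : b = 0 := by omega
    exact ⟨Y, extClosure_zero_subset hadd w hw hY, i, r, hir⟩
  | succ k ih =>
    intro a b ha hb hk Y hY X hX i r hir
    by_cases hb1 : 1 ≤ b
    · obtain ⟨N, hN, m, FA, _⟩ := strip_top hadd w hw a b (by omega) Y hY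
      have hX0 : X ∈ w.wLE (b - 1) := w.le_mem_wLE hX.1 (by omega)
      obtain ⟨ψ, hψ⟩ := FA X hX0 i
      exact ih a (b - 1) ha (by omega) (by omega) N hN X hX ψ (m ≫ r)
        (by rw [← Category.assoc, hψ, hir])
    · obtain rfl : b = 0 := by omega
      by_cases ha1 : a ≤ -1
      · obtain ⟨M, hM, m, FA, _⟩ := strip_bottom hadd w hw a 0 (by omega) Y hY
        have hXG : X ∈ w.wGE (a + 1) := w.ge_mem_wGE hX.2 (by omega)
        obtain ⟨ρ, hρ⟩ := FA X hXG r
        exact ih (a + 1) 0 (by omega) le_rfl (by omega) M hM X hX (i ≫ m) ρ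
          (by rw [Category.assoc, hρ, hir])
      · obtain rfl : a = 0 := by omega
        exact ⟨Y, extClosure_zero_subset hadd w hw hY, i, r, hir⟩

end Main
/-- If `H` is a full additive subcategory generating the triangulated category `C`, and `w`
is a weight structure whose heart contains `H`, then the heart equals the Karoubi envelope
of `H` in `C`: an object lies in the heart iff it is a retract of an object of `H`. -/
theorem heart_eq_karoubiEnvelope
    {C : Type u} [Category.{v} C] [Preadditive C] [HasZeroObject C]
    [HasShift C ℤ] [∀ n : ℤ, (shiftFunctor C n).Additive] [Pretriangulated C]
    (H : Set C) (hadd : IsAdditiveSubcategory H) (hgen : Generates H)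
    (w : WeightStructure C) (hw : H ⊆ w.heart) (X : C) :
    X ∈ w.heart ↔ ∃ (M : C) (_ : M ∈ H) (i : X ⟶ M) (r : M ⟶ X), i ≫ r = 𝟙 X := by
  constructor
  · intro hX
    obtain ⟨a, b, ha, hb, hEC⟩ := isGenerated_extClosure (hgen X)
    obtain ⟨M, hM, i, r, hir⟩ := heart_retract_aux hadd w hw (b - a).toNat a b ha hb
      (by omega) X hEC X hX (𝟙 X) (𝟙 X) (by simp)
    exact ⟨M, hM, i, r, hir⟩
  · rintro ⟨M, hM, i, r, hir⟩
    exact ⟨w.retract_le X M i r hir (hw hM).1, w.retract_ge X M i r hir (hw hM).2⟩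
end

section
/- Let C be a triangulated category (satisfying the octahedron axiom) with a weight structure w. Fix a morphism u : M_- → M_+ with M_- ∈ C_{w≤0} and M_+ ∈ C_{w≥0}, a distinguished triangle C₀ →v_- M_- →u M_+ →v_+ C₀[1], and a weight filtration C_{≤-2} →c_- C₀ →c_+ C_{≥1} →δ_C C_{≤-2}[1] of C₀ avoiding weights -1 and 0 (so C_{≤-2} ∈ C_{w≤-2}, C_{≥1} ∈ C_{w≥1}). Then there exist an object G of the heart C_{w=0} and morphisms π₀ : M_- → G, i₀ : G → M_+, δ_- : G → C_{≤-2}[1], δ_+ : C_{≥1} → G such that: (i) C_{≤-2} →(v_-∘c_-) M_- →π₀ G →δ_- C_{≤-2}[1] is a distinguished triangle (a weight filtration of M_- avoiding weight -1); (ii) C_{≥1} →δ_+ G →i₀ M_+ →((c_+[1])∘v_+) C_{≥1}[1] is a distinguished triangle (a weight filtration of M_+ avoiding weight 1); (iii) u = i₀ ∘ π₀; (iv) δ_C = δ_- ∘ δ_+. In particular, M_- is without weight -1 and M_+ is without weight 1. -/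
open CategoryTheory CategoryTheory.Limits CategoryTheory.Pretriangulated

universe v u

namespace WeightStructure

variable {C : Type u} [Category.{v} C] [Preadditive C] [HasZeroObject C]
  [HasShift C ℤ] [∀ n : ℤ, (shiftFunctor C n).Additive] [Pretriangulated C]
  (w : WeightStructure C)

lemma mem_le_of_iso {X Y : C} (e : X ≅ Y) (h : Y ∈ w.le) : X ∈ w.le :=
  w.retract_le X Y e.hom e.inv e.hom_inv_id h

lemma mem_ge_of_iso {X Y : C} (e : X ≅ Y) (h : Y ∈ w.ge) : X ∈ w.ge :=
  w.retract_ge X Y e.hom e.inv e.hom_inv_id h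

lemma shift_neg_one_mem_le {A : C} (hA : A ∈ w.le) : A⟦(-1:ℤ)⟧ ∈ w.le := by
  obtain ⟨B, hB, ⟨e⟩⟩ := w.le_shift hA
  exact w.mem_le_of_iso (((shiftFunctor C (-1:ℤ)).mapIso e).trans
    ((shiftFunctorCompIsoId C (1:ℤ) (-1:ℤ) (by ring)).app B)) hB

lemma orth_neg {A N : C} (hA : A ∈ w.le) (hN : N ∈ w.ge) (f : A⟦(-1:ℤ)⟧ ⟶ N) : f = 0 := by
  have h0 := w.orth A (N⟦(1:ℤ)⟧) hA ⟨N, hN, ⟨Iso.refl _⟩⟩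
    (((shiftFunctorCompIsoId C (-1:ℤ) (1:ℤ) (by ring)).app A).inv ≫ (shiftFunctor C (1:ℤ)).map f)
  have h1 : (shiftFunctor C (1:ℤ)).map f = 0 := by
    have := congrArg (fun g => (((shiftFunctorCompIsoId C (-1:ℤ) (1:ℤ) (by ring)).app A).hom ≫ g)) h0
    simpa using this
  apply (shiftFunctor C (1:ℤ)).map_injective
  rw [h1, Functor.map_zero]

lemma ext_le (T : Triangle C) (hT : T ∈ distTriang C)
    (h1 : T.obj₁ ∈ w.le) (h3 : T.obj₃ ∈ w.le) : T.obj₂ ∈ w.le := by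
  obtain ⟨A', B', a', b', δ', hT', hA', hB'⟩ := w.exists_wf T.obj₂
  have hb' : b' = 0 := by
    obtain ⟨g, hg⟩ := Triangle.yoneda_exact₂ T hT b' (w.orth _ _ h1 hB' _)
    rw [hg, w.orth _ _ h3 hB' g, Limits.comp_zero]
  obtain ⟨r, hr⟩ := Triangle.coyoneda_exact₂ _ hT' (𝟙 T.obj₂)
    (by show 𝟙 T.obj₂ ≫ b' = 0; rw [hb', Limits.comp_zero])
  exact w.retract_le _ A' r a' hr.symm hA'

lemma ext_ge (T : Triangle C) (hT : T ∈ distTriang C)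
    (h1 : T.obj₁ ∈ w.ge) (h3 : T.obj₃ ∈ w.ge) : T.obj₂ ∈ w.ge := by
  obtain ⟨A', B', a', b', δ', hT', hA', hB'⟩ := w.exists_wf (T.obj₂⟦(1:ℤ)⟧)
  have hT'' := Triangle.shift_distinguished (Triangle.mk a' b' δ') hT' (-1)
  set T'' := (CategoryTheory.shiftFunctor (Triangle C) (-1:ℤ)).obj (Triangle.mk a' b' δ') with hT''def
  let e : T''.obj₂ ≅ T.obj₂ := (shiftFunctorCompIsoId C (1:ℤ) (-1:ℤ) (by ring)).app T.obj₂
  have hmor1 : T''.mor₁ = 0 := by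
    have hf : (T''.mor₁ ≫ e.hom : T''.obj₁ ⟶ T.obj₂) = 0 := by
      obtain ⟨g, hg⟩ := Triangle.coyoneda_exact₂ T hT (T''.mor₁ ≫ e.hom)
        (by rw [Category.assoc]; exact w.orth_neg hA' h3 _)
      rw [hg, show g = 0 from w.orth_neg hA' h1 g, Limits.zero_comp]
    have : T''.mor₁ = (T''.mor₁ ≫ e.hom) ≫ e.inv := by simp
    rw [this, hf, Limits.zero_comp]
  obtain ⟨g, hg⟩ := Triangle.yoneda_exact₂ T'' hT'' (𝟙 T''.obj₂)
    (by rw [hmor1, Limits.zero_comp])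
  have hB'' : T''.obj₃ ∈ w.ge := by
    obtain ⟨B₀, hB₀, ⟨e'⟩⟩ := hB'
    exact w.mem_ge_of_iso (((shiftFunctor C (-1:ℤ)).mapIso e').trans
      ((shiftFunctorCompIsoId C (1:ℤ) (-1:ℤ) (by ring)).app B₀)) hB₀
  have h2 : T''.obj₂ ∈ w.ge := w.retract_ge _ _ T''.mor₂ g hg.symm hB''
  exact w.mem_ge_of_iso e.symm h2

end WeightStructure

/-- The main factorization theorem: if the cone `C₀[1]` of `u : M₋ ⟶ M₊` (with `M₋` of
weights `≤ 0` and `M₊` of weights `≥ 0`) is such that `C₀` is without weights `-1` and `0`,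
then `u` factors through an object `G` of the heart, via a weight filtration of `M₋`
avoiding weight `-1` and a weight filtration of `M₊` avoiding weight `1`, compatibly with
the connecting morphism of the chosen weight filtration of `C₀`. -/
theorem main_factorization
    {C : Type u} [Category.{v} C] [Preadditive C] [HasZeroObject C]
    [HasShift C ℤ] [∀ n : ℤ, (shiftFunctor C n).Additive] [Pretriangulated C]
    [IsTriangulated C]
    (w : WeightStructure C) (Mm Mp C₀ Cle Cge : C)
    (u : Mm ⟶ Mp) (hMm : Mm ∈ w.le) (hMp : Mp ∈ w.ge)
    (vm : C₀ ⟶ Mm) (vp : Mp ⟶ C₀⟦(1:ℤ)⟧)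
    (hu : Triangle.mk vm u vp ∈ distTriang C)
    (cm : Cle ⟶ C₀) (cp : C₀ ⟶ Cge) (δC : Cge ⟶ Cle⟦(1:ℤ)⟧)
    (hC : Triangle.mk cm cp δC ∈ distTriang C)
    (hCle : Cle ∈ w.wLE (-2)) (hCge : Cge ∈ w.wGE 1) :
    ∃ (G : C) (_ : G ∈ w.heart) (π₀ : Mm ⟶ G) (i₀ : G ⟶ Mp)
      (δm : G ⟶ Cle⟦(1:ℤ)⟧) (δp : Cge ⟶ G),
      Triangle.mk (cm ≫ vm) π₀ δm ∈ (distTriang C) ∧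
      Triangle.mk δp i₀ (vp ≫ (shiftFunctor C (1:ℤ)).map cp) ∈ (distTriang C) ∧
      u = π₀ ≫ i₀ ∧ δC = δp ≫ δm := by
  obtain ⟨G, π₀, δm, hG⟩ := Pretriangulated.distinguished_cocone_triangle (cm ≫ vm)
  have oct := Triangulated.someOctahedron (u₁₂ := cm) (u₂₃ := vm) rfl hC hu hG
  have hGle : G ∈ w.le := by
    have hCle1 : Cle⟦(1:ℤ)⟧ ∈ w.le := by
      obtain ⟨A, hA, ⟨eA⟩⟩ := hCle
      exact w.mem_le_of_iso (((shiftFunctor C (1:ℤ)).mapIso eA).trans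
        ((shiftFunctorAdd' C (-2:ℤ) (1:ℤ) (-1:ℤ) (by ring)).app A).symm)
        (w.shift_neg_one_mem_le hA)
    exact w.ext_le (Triangle.mk (cm ≫ vm) π₀ δm).rotate
      (Pretriangulated.rot_of_distTriang _ hG) hMm hCle1
  have hGge : G ∈ w.ge := by
    have hCge0 : Cge ∈ w.ge := w.ge_shift hCge
    exact w.ext_ge (Triangle.mk oct.m₁ oct.m₃ (vp ≫ cp⟦(1:ℤ)⟧')) oct.mem hCge0 hMp
  exact ⟨G, ⟨hGle, hGge⟩, π₀, oct.m₃, δm, oct.m₁, hG, oct.mem, oct.comm₃.symm, oct.comm₂.symm⟩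
end
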